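/- Fix indices p > q > r > s in {1, …, N} and consider the 16 N-qubit Pauli strings obtained by choosing either X or Y at each of the four positions p, q, r, s, placing Z at every position strictly between q and p and at every position strictly between s and r, and I at all remaining positions. The minimum number of parts in a partition of these 16 strings into families of pairwise commuting strings is exactly 2: the 8 strings with an even number of Y-choices form one pairwise-commuting family and the 8 strings with an odd number of Y-choices form another, while no single pairwise-commuting family contains all 16 strings. -/

import Mathlib

open Matrix Finset

inductive Pauli : Type
  | I | X | Y | Z
  deriving DecidableEq

instance : Fintype Pauli :=
  ⟨{Pauli.I, Pauli.X, Pauli.Y, Pauli.Z}, fun x => by cases x <;> simp⟩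

noncomputable def Pauli.mat : Pauli → Matrix (Fin 2) (Fin 2) ℂ
  | .I => 1
  | .X => !![0, 1; 1, 0]
  | .Y => !![0, -Complex.I; Complex.I, 0]
  | .Z => !![1, 0; 0, -1]

/-- An `N`-qubit Pauli string: a function from qubit indices to single-qubit Paulis. -/
abbrev PauliString (N : ℕ) := Fin N → Pauli

/-- The `2^N × 2^N` matrix of a Pauli string, as the tensor (Kronecker) product of its
entries, with rows/columns indexed by `Fin N → Fin 2`. -/
noncomputable def Pmat {N : ℕ} (A : PauliString N) :
    Matrix (Fin N → Fin 2) (Fin N → Fin 2) ℂ :=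
  Matrix.of fun x y => ∏ j, (A j).mat (x j) (y j)

/-- The Jordan-Wigner Pauli string of a double excitation operator `a†_p a†_q a_r a_s`
(with `p > q > r > s`), determined by a choice `b : Fin 4 → Bool` of `X` (false) or
`Y` (true) at each of the four positions `p, q, r, s`; `Z` is placed at every position
strictly between `q` and `p` and strictly between `s` and `r`, and `I` elsewhere. -/
def jwString (N : ℕ) (p q r s : Fin N) (b : Fin 4 → Bool) : PauliString N := fun j =>
  if j = p then (if b 0 then Pauli.Y else Pauli.X)
  else if j = q then (if b 1 then Pauli.Y else Pauli.X)
  else if j = r then (if b 2 then Pauli.Y else Pauli.X)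
  else if j = s then (if b 3 then Pauli.Y else Pauli.X)
  else if (q < j ∧ j < p) ∨ (s < j ∧ j < r) then Pauli.Z
  else Pauli.I

/-- Number of `Y` choices in a selection `b : Fin 4 → Bool`. -/
def yCount (b : Fin 4 → Bool) : ℕ := (Finset.univ.filter fun i => b i = true).card

/-- `P` is a partition of the finite set `T` of Pauli strings into families of pairwise
commuting strings. -/
def IsCommPartition {N : ℕ} (T : Finset (PauliString N))
    (P : Finset (Finset (PauliString N))) : Prop :=
  (∀ S ∈ P, S.Nonempty) ∧
  (P : Set (Finset (PauliString N))).PairwiseDisjoint id ∧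
  P.sup id = T ∧
  ∀ S ∈ P, ∀ A ∈ S, ∀ B ∈ S, Pmat A * Pmat B = Pmat B * Pmat A

def Pauli.anti (a b : Pauli) : Bool := a != b && a != Pauli.I && b != Pauli.I

lemma Pauli.mat_mul_comm (a b : Pauli) :
    a.mat * b.mat = (if a.anti b then (-1:ℂ) else 1) • (b.mat * a.mat) := by
  cases a <;> cases b <;>
  · ext i j
    fin_cases i <;> fin_cases j <;>
      simp [Pauli.mat, Pauli.anti, Matrix.mul_apply, Fin.sum_univ_two]

lemma Pauli.mat_sq (a : Pauli) : a.mat * a.mat = 1 := by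
  cases a <;>
  · ext i j
    fin_cases i <;> fin_cases j <;>
      simp [Pauli.mat, Matrix.mul_apply, Fin.sum_univ_two, Matrix.one_apply]

lemma Pmat_mul {N : ℕ} (A B : PauliString N) :
    Pmat A * Pmat B = Matrix.of fun x y => ∏ j, ((A j).mat * (B j).mat) (x j) (y j) := by
  ext x y
  simp only [Pmat, Matrix.of_apply, Matrix.mul_apply, ← Finset.prod_mul_distrib]
  rw [Finset.prod_univ_sum, Fintype.piFinset_univ]

lemma Pmat_sq {N : ℕ} (A : PauliString N) : Pmat A * Pmat A = 1 := by
  rw [Pmat_mul]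
  ext x y
  simp only [Matrix.of_apply, Pauli.mat_sq]
  by_cases h : x = y
  · subst h; simp [Matrix.one_apply]
  · rw [Matrix.one_apply_ne h]
    obtain ⟨j, hj⟩ := Function.ne_iff.mp h
    exact Finset.prod_eq_zero (Finset.mem_univ j) (Matrix.one_apply_ne hj)

lemma Pmat_comm_sign {N : ℕ} (A B : PauliString N) :
    Pmat A * Pmat B =
      (∏ j, (if (A j).anti (B j) then (-1:ℂ) else 1)) • (Pmat B * Pmat A) := by
  rw [Pmat_mul, Pmat_mul]
  ext x y
  simp only [Matrix.of_apply, Matrix.smul_apply, smul_eq_mul, ← Finset.prod_mul_distrib]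
  refine Finset.prod_congr rfl fun j _ => ?_
  rw [Pauli.mat_mul_comm (A j) (B j)]
  simp

lemma Pmat_anticomm_ne {N : ℕ} (A B : PauliString N)
    (h : ∏ j, (if (A j).anti (B j) then (-1:ℂ) else 1) = -1) :
    Pmat A * Pmat B ≠ Pmat B * Pmat A := by
  intro he
  have h1 : Pmat B * Pmat A = -(Pmat B * Pmat A) := by
    conv_lhs => rw [← he, Pmat_comm_sign A B, h]
    simp
  have h2 : Pmat B * Pmat A = 0 := by
    have : (2:ℂ) • (Pmat B * Pmat A) = 0 := by
      rw [two_smul]; nth_rewrite 1 [h1]; exact neg_add_cancel _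
    rcases smul_eq_zero.mp this with h | h
    · norm_num at h
    · exact h
  have h3 : (1 : Matrix (Fin N → Fin 2) (Fin N → Fin 2) ℂ) = 0 := by
    calc (1 : Matrix (Fin N → Fin 2) (Fin N → Fin 2) ℂ)
        = Pmat B * Pmat B := (Pmat_sq B).symm
      _ = Pmat B * ((Pmat A * Pmat A) * Pmat B) := by rw [Pmat_sq A, one_mul]
      _ = Pmat B * Pmat A * (Pmat A * Pmat B) := by noncomm_ring
      _ = 0 := by rw [h2, zero_mul]
  have := congrFun (congrFun h3 (fun _ => 0)) (fun _ => 0)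
  simp [Matrix.one_apply] at this

lemma parity_key : ∀ b b' : Fin 4 → Bool, (Even (yCount b) ↔ Even (yCount b')) →
    Even (((Finset.univ : Finset (Fin 4)).filter fun i => ¬ (b i = b' i)).card) := by decide

lemma anti_self : ∀ a : Pauli, Pauli.anti a a = false := by decide

lemma anti_key : ∀ u v : Bool,
    (if Pauli.anti (if u then Pauli.Y else Pauli.X) (if v then Pauli.Y else Pauli.X)
      then (-1:ℂ) else 1) = (if u = v then 1 else -1) := by
  intro u v; cases u <;> cases v <;> simp [Pauli.anti]

section JW
variable {N : ℕ} {p q r s : Fin N}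

lemma jw_sign (hpq : q < p) (hqr : r < q) (hrs : s < r) (b b' : Fin 4 → Bool) :
    ∏ j, (if (jwString N p q r s b j).anti (jwString N p q r s b' j) then (-1:ℂ) else 1)
      = (-1:ℂ) ^ ((Finset.univ.filter fun i : Fin 4 => ¬ (b i = b' i)).card) := by
  have hpq' : p ≠ q := hpq.ne'
  have hpr : p ≠ r := (hqr.trans hpq).ne'
  have hps : p ≠ s := (hrs.trans (hqr.trans hpq)).ne'
  have hqr' : q ≠ r := hqr.ne'
  have hqs : q ≠ s := (hrs.trans hqr).ne'
  have hrs' : r ≠ s := hrs.ne'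
  have hsub : ∏ j, (if (jwString N p q r s b j).anti (jwString N p q r s b' j) then (-1:ℂ) else 1)
      = ∏ j ∈ ({p, q, r, s} : Finset (Fin N)),
          (if (jwString N p q r s b j).anti (jwString N p q r s b' j) then (-1:ℂ) else 1) := by
    refine (Finset.prod_subset (Finset.subset_univ _) fun j _ hj => ?_).symm
    simp only [Finset.mem_insert, Finset.mem_singleton, not_or] at hj
    obtain ⟨h1, h2, h3, h4⟩ := hj
    have : jwString N p q r s b j = jwString N p q r s b' j := by
      simp [jwString, h1, h2, h3, h4]
    rw [this, anti_self, if_neg (by simp)]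
  rw [hsub]
  rw [Finset.prod_insert (by simp [hpq', hpr, hps]),
      Finset.prod_insert (by simp [hqr', hqs]),
      Finset.prod_insert (by simp [hrs']), Finset.prod_singleton]
  have ep : ∀ c : Fin 4 → Bool, jwString N p q r s c p = (if c 0 then Pauli.Y else Pauli.X) := by
    intro c; simp [jwString]
  have eq' : ∀ c, jwString N p q r s c q = (if c 1 then Pauli.Y else Pauli.X) := by
    intro c; simp [jwString, hpq'.symm]
  have er : ∀ c, jwString N p q r s c r = (if c 2 then Pauli.Y else Pauli.X) := by
    intro c; simp [jwString, hpr.symm, hqr'.symm]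
  have es : ∀ c, jwString N p q r s c s = (if c 3 then Pauli.Y else Pauli.X) := by
    intro c; simp [jwString, hps.symm, hqs.symm, hrs'.symm]
  rw [ep, ep, eq', eq', er, er, es, es, anti_key, anti_key, anti_key, anti_key]
  have : ∀ c c' : Fin 4 → Bool,
      ((if c 0 = c' 0 then (1:ℂ) else -1) * ((if c 1 = c' 1 then (1:ℂ) else -1) *
        ((if c 2 = c' 2 then (1:ℂ) else -1) * (if c 3 = c' 3 then (1:ℂ) else -1))))
      = ∏ i : Fin 4, (if c i = c' i then (1:ℂ) else -1) := by
    intro c c'; rw [Fin.prod_univ_four]; ring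
  rw [this b b', Finset.prod_ite, Finset.prod_const_one, one_mul, Finset.prod_const]

lemma jw_comm (hpq : q < p) (hqr : r < q) (hrs : s < r) (b b' : Fin 4 → Bool) (hpar : Even (yCount b) ↔ Even (yCount b')) :
    Pmat (jwString N p q r s b) * Pmat (jwString N p q r s b')
      = Pmat (jwString N p q r s b') * Pmat (jwString N p q r s b) := by
  rw [Pmat_comm_sign, jw_sign hpq hqr hrs, (parity_key b b' hpar).neg_one_pow, one_smul]

lemma jw_noncomm (hpq : q < p) (hqr : r < q) (hrs : s < r) :
    Pmat (jwString N p q r s (fun _ => false)) * Pmat (jwString N p q r s ![true, false, false, false])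
      ≠ Pmat (jwString N p q r s ![true, false, false, false]) * Pmat (jwString N p q r s (fun _ => false)) := by
  apply Pmat_anticomm_ne
  have h1 : ((Finset.univ.filter fun i : Fin 4 =>
      ¬ ((fun _ => false) i = ![true, false, false, false] i)).card) = 1 := by decide
  rw [jw_sign hpq hqr hrs, h1, pow_one]

lemma jw_inj (hpq : q < p) (hqr : r < q) (hrs : s < r) : Function.Injective (jwString N p q r s) := by
  have hpq' : p ≠ q := hpq.ne'
  have hpr : p ≠ r := (hqr.trans hpq).ne'
  have hps : p ≠ s := (hrs.trans (hqr.trans hpq)).ne'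
  have hqr' : q ≠ r := hqr.ne'
  have hqs : q ≠ s := (hrs.trans hqr).ne'
  have hrs' : r ≠ s := hrs.ne'
  have key : ∀ u v : Bool, (if u then Pauli.Y else Pauli.X) = (if v then Pauli.Y else Pauli.X)
      → u = v := by decide
  intro b b' h
  have h0 := congrFun h p
  have h1 := congrFun h q
  have h2 := congrFun h r
  have h3 := congrFun h s
  simp only [jwString, if_pos rfl] at h0
  simp only [jwString, if_neg hpq'.symm, if_pos rfl] at h1
  simp only [jwString, if_neg hpr.symm, if_neg hqr'.symm, if_pos rfl] at h2
  simp only [jwString, if_neg hps.symm, if_neg hqs.symm, if_neg hrs'.symm, if_pos rfl] at h3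
  funext i
  fin_cases i
  · exact key _ _ h0
  · exact key _ _ h1
  · exact key _ _ h2
  · exact key _ _ h3

end JW

/-- The minimum number of parts in a partition of the 16 Jordan-Wigner strings of
`a†_p a†_q a_r a_s` into pairwise-commuting families is exactly 2: the 8 strings with an
even number of `Y` choices and the 8 strings with an odd number of `Y` choices form such
a partition, while no single pairwise-commuting family contains all 16 strings. -/
theorem jw_min_commuting_partition {N : ℕ} (p q r s : Fin N)
    (hpq : q < p) (hqr : r < q) (hrs : s < r) :
    IsLeast {k | ∃ P, IsCommPartition (Finset.univ.image (jwString N p q r s)) P ∧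
        P.card = k} 2 ∧
    (let evenFam := (Finset.univ.filter fun b => Even (yCount b)).image (jwString N p q r s)
     let oddFam := (Finset.univ.filter fun b => ¬ Even (yCount b)).image (jwString N p q r s)
     evenFam.card = 8 ∧ oddFam.card = 8 ∧
       IsCommPartition (Finset.univ.image (jwString N p q r s)) {evenFam, oddFam} ∧
       ({evenFam, oddFam} : Finset (Finset (PauliString N))).card = 2) ∧
    ¬ ∀ b b' : Fin 4 → Bool,
        Pmat (jwString N p q r s b) * Pmat (jwString N p q r s b') =
          Pmat (jwString N p q r s b') * Pmat (jwString N p q r s b) := by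
  classical
  have inj : Function.Injective (jwString N p q r s) := jw_inj hpq hqr hrs
  set E := (Finset.univ.filter fun b => Even (yCount b)).image (jwString N p q r s) with hE
  set O := (Finset.univ.filter fun b => ¬ Even (yCount b)).image (jwString N p q r s) with hO
  have hEcard : E.card = 8 := by
    rw [hE, Finset.card_image_of_injective _ inj]
    set_option maxHeartbeats 1000000 in decide
  have hOcard : O.card = 8 := by
    rw [hO, Finset.card_image_of_injective _ inj]
    set_option maxHeartbeats 1000000 in decide
  have hEmem : jwString N p q r s (fun _ => false) ∈ E := by
    rw [hE]
    exact Finset.mem_image_of_mem _ (Finset.mem_filter.mpr ⟨Finset.mem_univ _, by decide⟩)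
  have hOmem : jwString N p q r s ![true, false, false, false] ∈ O := by
    rw [hO]
    exact Finset.mem_image_of_mem _ (Finset.mem_filter.mpr ⟨Finset.mem_univ _, by decide⟩)
  have hdisj : Disjoint E O := by
    rw [Finset.disjoint_left]
    intro A hA hA'
    rw [hE] at hA; rw [hO] at hA'
    obtain ⟨b, hb, hb2⟩ := Finset.mem_image.mp hA
    obtain ⟨b', hb', hb2'⟩ := Finset.mem_image.mp hA'
    have : b = b' := inj (hb2.trans hb2'.symm)
    subst this
    exact (Finset.mem_filter.mp hb').2 (Finset.mem_filter.mp hb).2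
  have hne : E ≠ O := by
    intro h
    exact Finset.disjoint_left.mp hdisj hEmem (h ▸ hEmem)
  have hunion : E ∪ O = Finset.univ.image (jwString N p q r s) := by
    rw [hE, hO, ← Finset.image_union, Finset.filter_union_filter_not_eq]
  have hpart : IsCommPartition (Finset.univ.image (jwString N p q r s)) {E, O} := by
    refine ⟨?_, ?_, ?_, ?_⟩
    · intro S hS
      rcases Finset.mem_insert.mp hS with h | h
      · exact ⟨_, h ▸ hEmem⟩
      · rw [Finset.mem_singleton] at h
        exact ⟨_, h ▸ hOmem⟩
    · intro a ha b hb hab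
      simp only [Finset.coe_insert, Finset.coe_singleton, Set.mem_insert_iff,
        Set.mem_singleton_iff] at ha hb
      rcases ha with ha | ha <;> rcases hb with hb | hb <;> subst ha <;> subst hb
      · exact absurd rfl hab
      · exact hdisj
      · exact hdisj.symm
      · exact absurd rfl hab
    · rw [Finset.sup_insert, Finset.sup_singleton, id, id, Finset.sup_eq_union, hunion]
    · intro S hS A hA B hB
      have key : ∀ b b' : Fin 4 → Bool, (Even (yCount b) ↔ Even (yCount b')) →
          A = jwString N p q r s b → B = jwString N p q r s b' →
          Pmat A * Pmat B = Pmat B * Pmat A := by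
        rintro b b' hpar rfl rfl
        exact jw_comm hpq hqr hrs b b' hpar
      rcases Finset.mem_insert.mp hS with h | h
      · subst h
        obtain ⟨b, hb, rfl⟩ := Finset.mem_image.mp hA
        obtain ⟨b', hb', rfl⟩ := Finset.mem_image.mp hB
        exact key b b' (iff_of_true (Finset.mem_filter.mp hb).2
          (Finset.mem_filter.mp hb').2) rfl rfl
      · rw [Finset.mem_singleton] at h
        subst h
        obtain ⟨b, hb, rfl⟩ := Finset.mem_image.mp hA
        obtain ⟨b', hb', rfl⟩ := Finset.mem_image.mp hB
        exact key b b' (iff_of_false (Finset.mem_filter.mp hb).2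
          (Finset.mem_filter.mp hb').2) rfl rfl
  refine ⟨⟨⟨{E, O}, hpart, Finset.card_pair hne⟩, ?_⟩, ⟨hEcard, hOcard, hpart, Finset.card_pair hne⟩, ?_⟩
  · rintro k ⟨P, hP, rfl⟩
    by_contra hlt
    push_neg at hlt
    have hle : P.card ≤ 1 := by omega
    have hA0 : jwString N p q r s (fun _ => false) ∈ P.sup id := by
      rw [hP.2.2.1]; exact Finset.mem_image_of_mem _ (Finset.mem_univ _)
    have hA1 : jwString N p q r s ![true, false, false, false] ∈ P.sup id := by
      rw [hP.2.2.1]; exact Finset.mem_image_of_mem _ (Finset.mem_univ _)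
    obtain ⟨S, hS, hS0⟩ := Finset.mem_sup.mp hA0
    obtain ⟨S', hS', hS1⟩ := Finset.mem_sup.mp hA1
    have hSS : S = S' := Finset.card_le_one.mp hle S hS S' hS'
    subst hSS
    exact jw_noncomm hpq hqr hrs (hP.2.2.2 S hS _ hS0 _ hS1)
  · intro hall
    exact jw_noncomm hpq hqr hrs (hall _ _)
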